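/- Let f ∈ (Λ_{ℤ,univ})[x] be a polynomial of degree at least 1 that is irreducible as a polynomial over the fraction field Q(Λ_{ℤ,univ}). Then there exists N such that for every prime p > N the reduction [f]_p ∈ (Λ_{𝔽_p,univ})[x] (obtained by applying the reduction homomorphism [·]_p to each coefficient of f) is nonzero and squarefree: in its factorization [f]_p = g₁^{m₁} ⋯ g_s^{m_s} into irreducibles over the field Λ_{𝔽_p,univ}, all multiplicities satisfy m₁ = ⋯ = m_s = 1. Equivalently, for every prime p > N, [f]_p and its formal derivative are coprime in (Λ_{𝔽_p,univ})[x]. -/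

import Mathlib

/-!
STATEMENT 3: Let `f ∈ (Λ_{ℤ,univ})[x]` have degree at least 1 and be irreducible as a
polynomial over the fraction field `Q(Λ_{ℤ,univ})`. Then for all sufficiently large primes
`p`, the coefficientwise reduction `[f]_p ∈ (Λ_{𝔽_p,univ})[x]` is nonzero and squarefree;
equivalently, `[f]_p` and its formal derivative are coprime in `(Λ_{𝔽_p,univ})[x]`.
-/

noncomputable section
set_option synthInstance.maxHeartbeats 1000000
set_option maxHeartbeats 1600000

/-- Coefficientwise mod-`p` reduction `Λ_{ℤ,univ} → Λ_{𝔽_p,univ}` as a ring homomorphism. -/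
def redHom (p : ℕ) : HahnSeries ℝ ℤ →+* HahnSeries ℝ (ZMod p) where
  toFun x := x.map (Int.castRingHom (ZMod p))
  map_zero' := by ext g; simp
  map_one' := HahnSeries.map_one ((Int.castRingHom (ZMod p)).toMonoidWithZeroHom)
  map_add' x y := HahnSeries.map_add ((Int.castRingHom (ZMod p)).toAddMonoidHom)
  map_mul' x y := HahnSeries.map_mul ((Int.castRingHom (ZMod p)).toNonUnitalRingHom)

theorem reduction_of_irreducible_is_squarefree_for_large_primes
    (f : Polynomial (HahnSeries ℝ ℤ)) (hdeg : 1 ≤ f.natDegree)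
    (hirr : Irreducible
      (f.map (algebraMap (HahnSeries ℝ ℤ) (FractionRing (HahnSeries ℝ ℤ))))) :
    ∃ N : ℕ, ∀ p : ℕ, p.Prime → N < p →
      f.map (redHom p) ≠ 0 ∧
      Squarefree (f.map (redHom p)) ∧
      IsCoprime (f.map (redHom p)) (Polynomial.derivative (f.map (redHom p))) := by
  set Λ := HahnSeries ℝ ℤ
  set K := FractionRing Λ
  haveI : CharZero Λ := by
    refine ⟨fun a b h => ?_⟩
    have h2 : (HahnSeries.C (a : ℤ) : Λ) = HahnSeries.C (b : ℤ) := by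
      simpa [map_natCast] using h
    exact_mod_cast HahnSeries.C_injective h2
  haveI : CharZero K := charZero_of_injective_algebraMap (IsFractionRing.injective Λ K)
  set φ := algebraMap Λ K
  -- separability over K
  have hsep : (f.map φ).Separable := hirr.separable
  obtain ⟨u, v, huv⟩ := hsep
  -- clear denominators
  obtain ⟨du, hdu⟩ := IsLocalization.integerNormalization_map_to_map (nonZeroDivisors Λ) u
  obtain ⟨dv, hdv⟩ := IsLocalization.integerNormalization_map_to_map (nonZeroDivisors Λ) v
  set U := IsLocalization.integerNormalization (nonZeroDivisors Λ) u
  set V := IsLocalization.integerNormalization (nonZeroDivisors Λ) v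
  set c : Λ := (du : Λ) * (dv : Λ)
  have hc : c ≠ 0 := mul_ne_zero (nonZeroDivisors.coe_ne_zero du) (nonZeroDivisors.coe_ne_zero dv)
  have key : (Polynomial.C (dv : Λ) * U) * f + (Polynomial.C (du : Λ) * V) * Polynomial.derivative f
      = Polynomial.C c := by
    apply Polynomial.map_injective φ (IsFractionRing.injective Λ K)
    have hder : (Polynomial.derivative f).map φ = Polynomial.derivative (f.map φ) :=
      (Polynomial.derivative_map f φ).symm
    have hU : U.map φ = Polynomial.C (φ (du : Λ)) * u := by
      rw [hdu, algebra_compatible_smul K ((du : Λ)) u, Polynomial.smul_eq_C_mul]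
    have hV : V.map φ = Polynomial.C (φ (dv : Λ)) * v := by
      rw [hdv, algebra_compatible_smul K ((dv : Λ)) v, Polynomial.smul_eq_C_mul]
    simp only [Polynomial.map_add, Polynomial.map_mul, Polynomial.map_C, hder, hU, hV]
    rw [map_mul, map_mul]
    have h2 : Polynomial.C (φ (du : Λ)) * Polynomial.C (φ (dv : Λ)) *
        (u * Polynomial.map φ f + v * Polynomial.derivative (Polynomial.map φ f))
        = Polynomial.C (φ (du : Λ)) * Polynomial.C (φ (dv : Λ)) := by rw [huv, mul_one]
    rw [← h2]
    ring
  -- choose N from a nonzero coefficient of c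
  obtain ⟨g, hg⟩ : ∃ g, c.coeff g ≠ 0 := by
    by_contra h
    push_neg at h
    exact hc (HahnSeries.ext (funext fun g => h g))
  refine ⟨(c.coeff g).natAbs, fun p hp hNp => ?_⟩
  haveI : Fact p.Prime := ⟨hp⟩
  set ψ := redHom p
  -- the reduced constant is nonzero
  have hcbar : ψ c ≠ 0 := by
    intro h0
    have h1 : ((c.coeff g : ℤ) : ZMod p) = 0 := by
      have := congrArg (fun x => HahnSeries.coeff x g) h0
      simpa using (show ((c.coeff g : ℤ) : ZMod p) = (ψ c).coeff g from rfl).trans this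
    have h2 : (p : ℤ) ∣ c.coeff g := (ZMod.intCast_zmod_eq_zero_iff_dvd _ p).mp h1
    have h3 : p ∣ (c.coeff g).natAbs := Int.natAbs_dvd_natAbs.mpr (by simpa using h2)
    have h4 : p ≤ (c.coeff g).natAbs := Nat.le_of_dvd (Int.natAbs_pos.mpr hg) h3
    omega
  -- push the Bezout identity through ψ
  have key2 : (Polynomial.C (ψ (dv : Λ)) * U.map ψ) * f.map ψ
      + (Polynomial.C (ψ (du : Λ)) * V.map ψ) * Polynomial.derivative (f.map ψ)
      = Polynomial.C (ψ c) := by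
    have := congrArg (Polynomial.map ψ) key
    simpa [Polynomial.map_add, Polynomial.map_mul, Polynomial.map_C,
      Polynomial.derivative_map] using this
  have hcop : IsCoprime (f.map ψ) (Polynomial.derivative (f.map ψ)) := by
    refine ⟨Polynomial.C (ψ c)⁻¹ * (Polynomial.C (ψ (dv : Λ)) * U.map ψ),
      Polynomial.C (ψ c)⁻¹ * (Polynomial.C (ψ (du : Λ)) * V.map ψ), ?_⟩
    have : Polynomial.C (ψ c)⁻¹ * ((Polynomial.C (ψ (dv : Λ)) * U.map ψ) * f.map ψ
        + (Polynomial.C (ψ (du : Λ)) * V.map ψ) * Polynomial.derivative (f.map ψ))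
        = Polynomial.C (ψ c)⁻¹ * Polynomial.C (ψ c) := by rw [key2]
    rw [← Polynomial.C_mul, inv_mul_cancel₀ hcbar, Polynomial.C_1] at this
    rw [← this]
    ring
  have hne : f.map ψ ≠ 0 := by
    intro h0
    rw [h0] at hcop
    rw [Polynomial.derivative_zero, isCoprime_zero_left] at hcop
    exact hcop.ne_zero rfl
  exact ⟨hne, (Polynomial.Separable.squarefree hcop), hcop⟩
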